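/- The resolvent kernel $H(t,s) = \sum_{n\ge 1} \kappa^{(n)}(t,s)$ of the Volterra kernel $\kappa(t,s) = \frac{\sigma^2}{\lambda^2+\sigma^2 t}\mathbb{1}_{s\le t}$ equals $H(t,s) = \frac{\sigma^2}{\lambda^2+\sigma^2 s}\mathbb{1}_{s\le t}$, i.e. the series of iterated kernels converges and sums to $\frac{\sigma^2}{\lambda^2+\sigma^2 t}\exp\left(\log\frac{\lambda^2+\sigma^2 t}{\lambda^2+\sigma^2 s}\right)\mathbb{1}_{s\le t}$. -/

import Mathlib

open intervalIntegral

noncomputable def iterKer (κ : ℝ → ℝ → ℝ) : ℕ → ℝ → ℝ → ℝ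
  | 0 => κ
  | n + 1 => fun t s => ∫ v in s..t, κ t v * iterKer κ n v s

lemma iterKer_formula (σ lam : ℝ) (hσ : 0 < σ) (hlam : lam ≠ 0)
    (κ : ℝ → ℝ → ℝ)
    (hκ : κ = fun t s => if s ≤ t then σ^2 / (lam^2 + σ^2 * t) else 0)
    (s : ℝ) (hs : 0 ≤ s) :
    ∀ n : ℕ, ∀ t : ℝ, s ≤ t →
      iterKer κ n t s = σ^2 / (lam^2 + σ^2 * t)
        * (Real.log (lam^2 + σ^2 * t) - Real.log (lam^2 + σ^2 * s)) ^ n / n.factorial := by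
  have hpos : ∀ v : ℝ, 0 ≤ v → 0 < lam^2 + σ^2 * v := by
    intro v hv
    have h1 : 0 < lam ^ 2 := by positivity
    nlinarith [sq_nonneg σ]
  intro n
  induction n with
  | zero =>
    intro t ht
    simp [iterKer, hκ, ht]
  | succ n ih =>
    intro t ht
    have ht0 : (0:ℝ) ≤ t := le_trans hs ht
    have hft : (0:ℝ) < lam^2 + σ^2 * t := hpos t ht0
    have huIcc : Set.uIcc s t = Set.Icc s t := Set.uIcc_of_le ht
    set g : ℝ → ℝ := fun v => Real.log (lam^2 + σ^2 * v) with hg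
    set φ : ℝ → ℝ := fun v =>
      σ^2 / (lam^2 + σ^2 * t) * (σ^2 / (lam^2 + σ^2 * v) * (g v - g s) ^ n / n.factorial)
      with hφ
    have hEq : Set.EqOn (fun v => κ t v * iterKer κ n v s) φ (Set.uIcc s t) := by
      intro v hv
      rw [huIcc] at hv
      have hv0 : 0 ≤ v := le_trans hs hv.1
      have hκt : κ t v = σ^2 / (lam^2 + σ^2 * t) := by rw [hκ]; simp [hv.2]
      simp only [hφ]
      rw [hκt, ih v hv.1]
    rw [show iterKer κ (n+1) t s = ∫ v in s..t, κ t v * iterKer κ n v s from rfl,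
      intervalIntegral.integral_congr hEq]
    -- derivative lemma
    have hderiv : ∀ v ∈ Set.uIcc s t,
        HasDerivAt (fun v => σ^2 / (lam^2 + σ^2 * t) * ((g v - g s) ^ (n+1) / (n+1).factorial))
          (φ v) v := by
      intro v hv
      rw [huIcc] at hv
      have hv0 : 0 ≤ v := le_trans hs hv.1
      have hfv : (0:ℝ) < lam^2 + σ^2 * v := hpos v hv0
      have h1 : HasDerivAt (fun v : ℝ => lam^2 + σ^2 * v) (σ^2) v := by
        simpa using ((hasDerivAt_id v).const_mul (σ^2)).const_add (lam^2)
      have h2 : HasDerivAt g (σ^2 / (lam^2 + σ^2 * v)) v := h1.log (ne_of_gt hfv)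
      have h3 : HasDerivAt (fun v => g v - g s) (σ^2 / (lam^2 + σ^2 * v)) v :=
        h2.sub_const (g s)
      have h4 := (h3.pow (n+1)).div_const ((n+1).factorial : ℝ)
      have h5 := h4.const_mul (σ^2 / (lam^2 + σ^2 * t))
      refine h5.congr_deriv ?_
      simp only [hφ, Nat.factorial_succ, Nat.add_sub_cancel]
      push_cast
      field_simp
    have hfne : ∀ v ∈ Set.uIcc s t, lam^2 + σ^2 * v ≠ 0 := by
      intro v hv
      rw [huIcc] at hv
      exact ne_of_gt (hpos v (le_trans hs hv.1))
    have hfcont : ContinuousOn (fun v : ℝ => lam^2 + σ^2 * v) (Set.uIcc s t) := by fun_prop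
    have hint : IntervalIntegrable φ MeasureTheory.volume s t := by
      apply ContinuousOn.intervalIntegrable
      apply ContinuousOn.mul continuousOn_const
      apply ContinuousOn.div_const
      exact (continuousOn_const.div hfcont hfne).mul
        (((hfcont.log hfne).sub continuousOn_const).pow n)
    rw [intervalIntegral.integral_eq_sub_of_hasDerivAt hderiv hint]
    simp [hg, mul_div_assoc]

/-- The resolvent kernel `H(t,s) = ∑_{n≥1} κ⁽ⁿ⁾(t,s)` of the Volterra kernel
`κ(t,s) = σ²/(λ²+σ²t) 1_{s≤t}`: the series of iterated kernels converges absolutely and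
sums to `σ²/(λ²+σ²s) = σ²/(λ²+σ²t) · exp(log((λ²+σ²t)/(λ²+σ²s)))` for `0 ≤ s ≤ t`. -/
theorem resolvent_kernel_formula (σ lam : ℝ) (hσ : 0 < σ) (hlam : lam ≠ 0)
    (κ : ℝ → ℝ → ℝ)
    (hκ : κ = fun t s => if s ≤ t then σ^2 / (lam^2 + σ^2 * t) else 0) :
    ∀ s t : ℝ, 0 ≤ s → s ≤ t →
      (Summable fun n : ℕ => |iterKer κ n t s|) ∧
      HasSum (fun n : ℕ => iterKer κ n t s) (σ^2 / (lam^2 + σ^2 * s)) ∧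
      σ^2 / (lam^2 + σ^2 * s)
        = σ^2 / (lam^2 + σ^2 * t)
          * Real.exp (Real.log ((lam^2 + σ^2 * t) / (lam^2 + σ^2 * s))) := by
  intro s t hs hst
  have ht0 : (0:ℝ) ≤ t := le_trans hs hst
  have h1 : 0 < lam ^ 2 := by positivity
  have hfs : (0:ℝ) < lam^2 + σ^2 * s := by nlinarith [sq_nonneg σ]
  have hft : (0:ℝ) < lam^2 + σ^2 * t := by nlinarith [sq_nonneg σ]
  have hform := iterKer_formula σ lam hσ hlam κ hκ s hs
  set L : ℝ := Real.log (lam^2 + σ^2 * t) - Real.log (lam^2 + σ^2 * s) with hL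
  have hLnn : 0 ≤ L := by
    have : Real.log (lam^2 + σ^2 * s) ≤ Real.log (lam^2 + σ^2 * t) :=
      Real.log_le_log hfs (by nlinarith)
    linarith
  have hExp : HasSum (fun n : ℕ => L ^ n / n.factorial) (Real.exp L) := by
    rw [Real.exp_eq_exp_ℝ]
    exact NormedSpace.expSeries_div_hasSum_exp L
  have hExpL : Real.exp L = (lam^2 + σ^2 * t) / (lam^2 + σ^2 * s) := by
    rw [hL, Real.exp_sub, Real.exp_log hft, Real.exp_log hfs]
  have hsum : HasSum (fun n : ℕ => iterKer κ n t s) (σ^2 / (lam^2 + σ^2 * s)) := by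
    have h := hExp.mul_left (σ^2 / (lam^2 + σ^2 * t))
    have heq : (fun n : ℕ => σ^2 / (lam^2 + σ^2 * t) * (L ^ n / n.factorial))
        = fun n : ℕ => iterKer κ n t s := by
      funext n
      rw [hform n t hst]
      ring
    rw [heq] at h
    suffices hc : σ^2 / (lam^2 + σ^2 * s) = σ^2 / (lam^2 + σ^2 * t) * Real.exp L from hc ▸ h
    rw [hExpL]
    field_simp
  refine ⟨?_, hsum, ?_⟩
  · have : (fun n : ℕ => |iterKer κ n t s|) = fun n : ℕ => iterKer κ n t s := by
      funext n
      rw [abs_of_nonneg]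
      rw [hform n t hst]
      positivity
    rw [this]
    exact hsum.summable
  · rw [Real.log_div (ne_of_gt hft) (ne_of_gt hfs), ← hL, hExpL]
    field_simp
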